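/- For β > 0, the function K(x,y) = exp(-β|x - y|) on [0,1]×[0,1] is the reproducing kernel of the Sobolev space H¹(0,1) equipped with inner product ⟨f,g⟩ = (1/2)(f(0)g(0) + f(1)g(1)) + (1/(2β))∫₀¹ (f'g' + β² fg) dx; that is, for every f ∈ H¹ and y ∈ [0,1], ⟨f, K(·,y)⟩ = f(y). -/

import Mathlib

open MeasureTheory intervalIntegral Set


lemma my_swap {a b : ℝ} (hab : a ≤ b) {g h : ℝ → ℝ} (hg : Continuous g)
    (hh : IntervalIntegrable h volume a b) :
    (∫ x in a..b, g x * ∫ t in a..x, h t) = ∫ t in a..b, (∫ x in t..b, g x) * h t := by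
  set μ := volume.restrict (Ioc a b) with hμ
  set S : Set (ℝ × ℝ) := {p : ℝ × ℝ | p.2 ≤ p.1} with hSdef
  have hS : MeasurableSet S := (isClosed_le continuous_snd continuous_fst).measurableSet
  set F : ℝ × ℝ → ℝ := S.indicator (fun q => g q.1 * h q.2) with hFdef
  have hgi : Integrable g μ := hg.integrableOn_Ioc
  have hhi : Integrable h μ := hh.1
  have hprod : Integrable (fun p : ℝ × ℝ => g p.1 * h p.2) (μ.prod μ) := hgi.mul_prod hhi
  have hF : Integrable F (μ.prod μ) := hprod.indicator hS
  have hF' : Integrable (Function.uncurry fun x t => F (x, t)) (μ.prod μ) := by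
    exact hF
  have key := MeasureTheory.integral_integral_swap hF'
  have hmemF : ∀ x t : ℝ, F (x, t) = if t ≤ x then g x * h t else 0 := by
    intro x t
    simp [hFdef, hSdef, Set.indicator_apply]
  calc (∫ x in a..b, g x * ∫ t in a..x, h t)
      = ∫ x, (∫ t, F (x, t) ∂μ) ∂μ := by
        rw [intervalIntegral.integral_of_le hab]
        refine setIntegral_congr_fun measurableSet_Ioc (fun x hx => ?_)
        have h1 : ∀ t, F (x, t) = (Iic x).indicator (fun t => g x * h t) t := by
          intro t; rw [hmemF]; simp [Set.indicator_apply]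
        rw [hμ]
        simp_rw [h1]
        rw [MeasureTheory.integral_indicator measurableSet_Iic,
          Measure.restrict_restrict measurableSet_Iic, Set.inter_comm,
          Set.Ioc_inter_Iic, min_eq_right hx.2,
          MeasureTheory.integral_const_mul, intervalIntegral.integral_of_le hx.1.le]
      _ = ∫ t, (∫ x, F (x, t) ∂μ) ∂μ := key
      _ = ∫ t in a..b, (∫ x in t..b, g x) * h t := by
        rw [intervalIntegral.integral_of_le hab]
        refine (setIntegral_congr_fun measurableSet_Ioc (fun t ht => ?_)).symm
        have h1 : ∀ x, F (x, t) = (Ici t).indicator (fun x => g x * h t) x := by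
          intro x; rw [hmemF]; simp [Set.indicator_apply]
        rw [hμ]
        simp_rw [h1]
        rw [MeasureTheory.integral_indicator measurableSet_Ici,
          Measure.restrict_restrict measurableSet_Ici]
        have h2 : Ici t ∩ Ioc a b = Icc t b := by
          ext z
          simp only [Set.mem_inter_iff, Set.mem_Ici, Set.mem_Ioc, Set.mem_Icc]
          exact ⟨fun ⟨h1', h2'⟩ => ⟨h1', h2'.2⟩, fun ⟨h1', h2'⟩ => ⟨h1', lt_of_lt_of_le ht.1 h1', h2'⟩⟩
        rw [h2, MeasureTheory.integral_Icc_eq_integral_Ioc,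
          MeasureTheory.integral_mul_const, intervalIntegral.integral_of_le ht.2]


lemma my_intE (c : ℝ) (hc : c ≠ 0) (y a b : ℝ) :
    ∫ x in a..b, Real.exp (c * (x - y)) =
      (Real.exp (c * (b - y)) - Real.exp (c * (a - y))) / c := by
  have hd : ∀ x ∈ Set.uIcc a b,
      HasDerivAt (fun u => Real.exp (c * (u - y)) / c) (Real.exp (c * (x - y))) x := by
    intro x _
    have h1 : HasDerivAt (fun u : ℝ => c * (u - y)) c x := by
      simpa using ((hasDerivAt_id x).sub_const y).const_mul c
    have h2 := ((Real.hasDerivAt_exp (c * (x - y))).comp x h1).div_const c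
    simpa [mul_div_assoc, mul_div_cancel_right₀ _ hc] using h2
  rw [intervalIntegral.integral_eq_sub_of_hasDerivAt hd
    ((Real.continuous_exp.comp (continuous_const.mul (continuous_id.sub continuous_const))).intervalIntegrable a b)]
  ring


theorem stmt7 (β : ℝ) (hβ : 0 < β) (y : ℝ) (hy : y ∈ Set.Icc (0 : ℝ) 1)
    (f f' : ℝ → ℝ)
    (hcont : ContinuousOn f (Set.Icc 0 1))
    (hint : IntervalIntegrable f' volume 0 1)
    (hint2 : IntervalIntegrable (fun x => (f' x) ^ 2) volume 0 1)
    (hrep : ∀ x ∈ Set.Icc (0 : ℝ) 1, f x = f 0 + ∫ t in (0 : ℝ)..x, f' t) :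
    (1 / 2) * (f 0 * Real.exp (-β * |0 - y|) + f 1 * Real.exp (-β * |1 - y|)) +
      (1 / (2 * β)) *
        ∫ x in (0 : ℝ)..1,
          (f' x * ((if x < y then β else -β) * Real.exp (-β * |x - y|)) +
            β ^ 2 * f x * Real.exp (-β * |x - y|))
      = f y := by
  obtain ⟨hy0, hy1⟩ := hy
  have hβ' : β ≠ 0 := ne_of_gt hβ
  set φ : ℝ → ℝ := fun x =>
    f' x * ((if x < y then β else -β) * Real.exp (-β * |x - y|)) +
      β ^ 2 * f x * Real.exp (-β * |x - y|) with hφdef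
  -- basic integrability
  have hint0y : IntervalIntegrable f' volume 0 y :=
    hint.mono_set (by rw [Set.uIcc_of_le hy0, Set.uIcc_of_le zero_le_one]
                      exact Set.Icc_subset_Icc le_rfl hy1)
  have hinty1 : IntervalIntegrable f' volume y 1 :=
    hint.mono_set (by rw [Set.uIcc_of_le hy1, Set.uIcc_of_le zero_le_one]
                      exact Set.Icc_subset_Icc hy0 le_rfl)
  have hintyx : ∀ x ∈ Set.Icc y 1, IntervalIntegrable f' volume y x := fun x hx =>
    hint.mono_set (by rw [Set.uIcc_of_le hx.1, Set.uIcc_of_le zero_le_one]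
                      exact Set.Icc_subset_Icc hy0 hx.2)
  -- continuity of kernels
  have hEℓcont : Continuous fun x => Real.exp (β * (x - y)) :=
    Real.continuous_exp.comp (continuous_const.mul (continuous_id.sub continuous_const))
  have hErcont : Continuous fun x => Real.exp (-β * (x - y)) :=
    Real.continuous_exp.comp (continuous_const.mul (continuous_id.sub continuous_const))
  have hKcont : Continuous fun x => Real.exp (-β * |x - y|) :=
    Real.continuous_exp.comp (continuous_const.mul (continuous_id.sub continuous_const).abs)
  -- integrability of φ on subintervals
  have hm_meas : Measurable fun x => (if x < y then β else -β) * Real.exp (-β * |x - y|) := by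
    refine Measurable.mul ?_ hKcont.measurable
    exact Measurable.ite measurableSet_Iio measurable_const measurable_const
  have hm_bdd : ∀ x, ‖(if x < y then β else -β) * Real.exp (-β * |x - y|)‖ ≤ |β| := by
    intro x
    rw [norm_mul]
    have h1 : ‖if x < y then β else -β‖ = |β| := by
      split_ifs <;> simp [Real.norm_eq_abs, abs_neg]
    have h2 : ‖Real.exp (-β * |x - y|)‖ ≤ 1 := by
      rw [Real.norm_eq_abs, abs_of_pos (Real.exp_pos _)]
      rw [Real.exp_le_one_iff]
      nlinarith [abs_nonneg (x - y)]
    calc ‖if x < y then β else -β‖ * ‖Real.exp (-β * |x - y|)‖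
        ≤ |β| * 1 := by rw [h1]; exact mul_le_mul_of_nonneg_left h2 (abs_nonneg _)
      _ = |β| := mul_one _
  have hφint : ∀ a b : ℝ, a ∈ Set.Icc (0:ℝ) 1 → b ∈ Set.Icc (0:ℝ) 1 → a ≤ b →
      IntervalIntegrable φ volume a b := by
    intro a b ha hb hab
    have hfab : IntervalIntegrable f' volume a b :=
      hint.mono_set (by rw [Set.uIcc_of_le hab, Set.uIcc_of_le zero_le_one]
                        exact Set.Icc_subset_Icc ha.1 hb.2)
    refine IntervalIntegrable.add ?_ ?_
    · rw [intervalIntegrable_iff] at hfab ⊢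
      refine (hfab.bdd_mul hm_meas.aestronglyMeasurable (Filter.Eventually.of_forall hm_bdd)).congr ?_
      exact Filter.Eventually.of_forall fun x => mul_comm _ _
    · apply ContinuousOn.intervalIntegrable
      refine ContinuousOn.mul (continuousOn_const.mul (hcont.mono ?_)) hKcont.continuousOn
      rw [Set.uIcc_of_le hab]
      exact Set.Icc_subset_Icc ha.1 hb.2
  have hφ0y : IntervalIntegrable φ volume 0 y := hφint 0 y ⟨le_rfl, zero_le_one⟩ ⟨hy0, hy1⟩ hy0
  have hφy1 : IntervalIntegrable φ volume y 1 := hφint y 1 ⟨hy0, hy1⟩ ⟨zero_le_one, le_rfl⟩ hy1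
  have hne : ∀ᵐ x : ℝ ∂volume, x ≠ y := by
    rw [ae_iff]
    simp only [not_not]
    rw [show {a : ℝ | a = y} = {y} from Set.setOf_eq_eq_singleton]
    exact Real.volume_singleton
  -- integrability for the left decomposition
  have hA : IntervalIntegrable (fun x => f' x * Real.exp (β * (x - y))) volume 0 y :=
    hint0y.mul_continuousOn hEℓcont.continuousOn
  have hB : IntervalIntegrable (fun x => Real.exp (β * (x - y))) volume 0 y :=
    hEℓcont.intervalIntegrable 0 y
  have hUcont : ContinuousOn (fun x => ∫ t in (0:ℝ)..x, f' t) (Set.uIcc 0 y) :=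
    continuousOn_primitive_interval' hint0y left_mem_uIcc
  have hC : IntervalIntegrable (fun x => Real.exp (β * (x - y)) * ∫ t in (0:ℝ)..x, f' t)
      volume 0 y :=
    (hEℓcont.continuousOn.mul hUcont).intervalIntegrable
  -- LEFT PIECE
  have hI1 : (∫ x in (0:ℝ)..y, φ x) = β * f y - β * f 0 * Real.exp (β * (0 - y)) := by
    have hcongr : (∫ x in (0:ℝ)..y, φ x) = ∫ x in (0:ℝ)..y,
        (β * (f' x * Real.exp (β * (x - y))) +
          (β ^ 2 * f 0 * Real.exp (β * (x - y)) +
            β ^ 2 * (Real.exp (β * (x - y)) * ∫ t in (0:ℝ)..x, f' t))) := by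
      apply intervalIntegral.integral_congr_ae
      filter_upwards [hne] with x hxy hx
      rw [Set.uIoc_of_le hy0] at hx
      have hxlt : x < y := lt_of_le_of_ne hx.2 hxy
      have hx01 : x ∈ Set.Icc (0:ℝ) 1 := ⟨hx.1.le, hx.2.trans hy1⟩
      rw [hφdef]
      simp only
      rw [if_pos hxlt, abs_of_neg (by linarith : x - y < 0), hrep x hx01,
        show -β * -(x - y) = β * (x - y) by ring]
      ring
    rw [hcongr, intervalIntegral.integral_add (hA.const_mul β)
        ((hB.const_mul _).add (hC.const_mul _)),
      intervalIntegral.integral_add (hB.const_mul _) (hC.const_mul _),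
      intervalIntegral.integral_const_mul, intervalIntegral.integral_const_mul,
      intervalIntegral.integral_const_mul,
      my_swap hy0 hEℓcont hint0y, my_intE β hβ' y 0 y]
    have hinner : (∫ t in (0:ℝ)..y, (∫ x in t..y, Real.exp (β * (x - y))) * f' t) =
        ∫ t in (0:ℝ)..y, (f' t - f' t * Real.exp (β * (t - y))) / β := by
      apply intervalIntegral.integral_congr
      intro t _
      simp only
      rw [my_intE β hβ' y t y, sub_self, mul_zero, Real.exp_zero]
      ring
    rw [hinner, intervalIntegral.integral_div,
      intervalIntegral.integral_sub hint0y hA,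
      hrep y ⟨hy0, hy1⟩, sub_self, mul_zero, Real.exp_zero]
    field_simp
    ring
  -- integrability for the right decomposition
  have hA' : IntervalIntegrable (fun x => f' x * Real.exp (-β * (x - y))) volume y 1 :=
    hinty1.mul_continuousOn hErcont.continuousOn
  have hB' : IntervalIntegrable (fun x => Real.exp (-β * (x - y))) volume y 1 :=
    hErcont.intervalIntegrable y 1
  have hVcont : ContinuousOn (fun x => ∫ t in y..x, f' t) (Set.uIcc y 1) :=
    continuousOn_primitive_interval' hinty1 left_mem_uIcc
  have hC' : IntervalIntegrable (fun x => Real.exp (-β * (x - y)) * ∫ t in y..x, f' t)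
      volume y 1 :=
    (hErcont.continuousOn.mul hVcont).intervalIntegrable
  have hf1 : f 1 = f y + ∫ t in y..1, f' t := by
    rw [hrep 1 ⟨zero_le_one, le_rfl⟩, hrep y ⟨hy0, hy1⟩,
      ← intervalIntegral.integral_add_adjacent_intervals hint0y hinty1]
    ring
  -- RIGHT PIECE
  have hI2 : (∫ x in y..1, φ x) = β * f y - β * f 1 * Real.exp (-β * (1 - y)) := by
    have hcongr : (∫ x in y..1, φ x) = ∫ x in y..1,
        (-β * (f' x * Real.exp (-β * (x - y))) +
          (β ^ 2 * f y * Real.exp (-β * (x - y)) +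
            β ^ 2 * (Real.exp (-β * (x - y)) * ∫ t in y..x, f' t))) := by
      apply intervalIntegral.integral_congr
      intro x hx
      rw [Set.uIcc_of_le hy1] at hx
      obtain ⟨hxl, hxr⟩ := hx
      have hx : x ∈ Set.Icc y 1 := ⟨hxl, hxr⟩
      have hx01 : x ∈ Set.Icc (0:ℝ) 1 := ⟨hy0.trans hx.1, hx.2⟩
      rw [hφdef]
      simp only
      rw [if_neg (not_lt.mpr hx.1), abs_of_nonneg (by linarith : (0:ℝ) ≤ x - y),
        hrep x hx01, ← intervalIntegral.integral_add_adjacent_intervals hint0y (hintyx x hx),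
        hrep y ⟨hy0, hy1⟩]
      ring
    rw [hcongr, intervalIntegral.integral_add (hA'.const_mul (-β))
        ((hB'.const_mul _).add (hC'.const_mul _)),
      intervalIntegral.integral_add (hB'.const_mul _) (hC'.const_mul _),
      intervalIntegral.integral_const_mul, intervalIntegral.integral_const_mul,
      intervalIntegral.integral_const_mul,
      my_swap hy1 hErcont hinty1, my_intE (-β) (neg_ne_zero.mpr hβ') y y 1,
      sub_self, mul_zero, Real.exp_zero, div_neg, ← neg_div, neg_sub]
    have hinner : (∫ t in y..1, (∫ x in t..1, Real.exp (-β * (x - y))) * f' t) =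
        ∫ t in y..1, (f' t * Real.exp (-β * (t - y)) - Real.exp (-β * (1 - y)) * f' t) / β := by
      apply intervalIntegral.integral_congr
      intro t _
      simp only
      rw [my_intE (-β) (neg_ne_zero.mpr hβ') y t 1, div_mul_eq_mul_div,
        div_eq_div_iff (neg_ne_zero.mpr hβ') hβ']
      ring
    rw [hinner, intervalIntegral.integral_div,
      intervalIntegral.integral_sub hA' (hinty1.const_mul _),
      intervalIntegral.integral_const_mul, hf1]
    field_simp
    ring
  -- ASSEMBLE
  rw [show (∫ x in (0:ℝ)..1, φ x) = (∫ x in (0:ℝ)..y, φ x) + ∫ x in y..1, φ x from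
      (intervalIntegral.integral_add_adjacent_intervals hφ0y hφy1).symm,
    hI1, hI2,
    show -β * |0 - y| = β * (0 - y) by rw [abs_of_nonpos (by linarith : (0:ℝ) - y ≤ 0)]; ring,
    show -β * |1 - y| = -β * (1 - y) by rw [abs_of_nonneg (by linarith : (0:ℝ) ≤ 1 - y)]]
  field_simp
  ring
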